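/- Let H be a finite set and s : X^n × H → ℝ with sensitivity Δ. Let OPT(X) = max_h s(X,h). For any t > 0, the exponential mechanism outputs an h with s(X,h) < OPT(X) − (2Δ/ε)(ln|H| + t) with probability at most exp(−t). -/

import Mathlib

open scoped Classical

/-- Output probability of the exponential mechanism with score s, sensitivity
parameter Δ and privacy parameter ε, on dataset X, at object h. -/
noncomputable def expMechProb {𝒳 H : Type*} [Fintype H] {n : ℕ}
    (s : (Fin n → 𝒳) → H → ℝ) (Δ ε : ℝ) (X : Fin n → 𝒳) (h : H) : ℝ :=
  Real.exp (ε * s X h / (2 * Δ)) / ∑ h' : H, Real.exp (ε * s X h' / (2 * Δ))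

/-- utility of the exponential mechanism: the probability that the
output has score below OPT − (2Δ/ε)(ln|H| + t) is at most exp(−t). -/
theorem exponential_mechanism_utility
    {𝒳 H : Type*} [Fintype H] [Nonempty H] (n : ℕ)
    (s : (Fin n → 𝒳) → H → ℝ) (Δ ε : ℝ) (hΔ : 0 < Δ) (hε : 0 < ε)
    (X : Fin n → 𝒳) (t : ℝ) (ht : 0 < t) :
    ∑ h ∈ Finset.univ.filter (fun h : H =>
        s X h < (⨆ h' : H, s X h') - (2 * Δ / ε) * (Real.log (Fintype.card H) + t)),
      expMechProb s Δ ε X h ≤ Real.exp (-t) := by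
  set OPT := ⨆ h' : H, s X h' with hOPT
  set c := (2 * Δ / ε) * (Real.log (Fintype.card H) + t) with hc
  set S := ∑ h' : H, Real.exp (ε * s X h' / (2 * Δ)) with hS
  obtain ⟨h0, hh0⟩ := Finite.exists_max (s X)
  have hOPTle : OPT ≤ s X h0 := ciSup_le hh0
  have hSpos : 0 < S := Finset.sum_pos (fun h _ => Real.exp_pos _) ⟨h0, Finset.mem_univ _⟩
  have hSge : Real.exp (ε * OPT / (2 * Δ)) ≤ S := by
    calc Real.exp (ε * OPT / (2 * Δ)) ≤ Real.exp (ε * s X h0 / (2 * Δ)) := by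
          apply Real.exp_le_exp.2
          apply div_le_div_of_nonneg_right _ (by positivity)
          exact mul_le_mul_of_nonneg_left hOPTle hε.le
      _ ≤ S := Finset.single_le_sum (f := fun h' : H => Real.exp (ε * s X h' / (2 * Δ)))
          (fun h _ => (Real.exp_pos _).le) (Finset.mem_univ h0)
  have hcard : (1 : ℝ) ≤ (Fintype.card H : ℝ) := by
    exact_mod_cast Fintype.card_pos
  have key : ∀ h ∈ Finset.univ.filter (fun h : H => s X h < OPT - c),
      expMechProb s Δ ε X h ≤ Real.exp (ε * (OPT - c) / (2 * Δ)) / Real.exp (ε * OPT / (2 * Δ)) := by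
    intro h hh
    have hbad : s X h < OPT - c := (Finset.mem_filter.1 hh).2
    unfold expMechProb
    rw [← hS]
    apply div_le_div₀ (Real.exp_pos _).le _ (Real.exp_pos _) hSge
    apply Real.exp_le_exp.2
    apply div_le_div_of_nonneg_right _ (by positivity)
    exact mul_le_mul_of_nonneg_left hbad.le hε.le
  calc ∑ h ∈ Finset.univ.filter (fun h : H => s X h < OPT - c), expMechProb s Δ ε X h
      ≤ ∑ _h ∈ Finset.univ.filter (fun h : H => s X h < OPT - c),
          Real.exp (ε * (OPT - c) / (2 * Δ)) / Real.exp (ε * OPT / (2 * Δ)) :=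
        Finset.sum_le_sum key
    _ = (Finset.univ.filter (fun h : H => s X h < OPT - c)).card *
          (Real.exp (ε * (OPT - c) / (2 * Δ)) / Real.exp (ε * OPT / (2 * Δ))) := by
        rw [Finset.sum_const, nsmul_eq_mul]
    _ ≤ (Fintype.card H : ℝ) *
          (Real.exp (ε * (OPT - c) / (2 * Δ)) / Real.exp (ε * OPT / (2 * Δ))) := by
        apply mul_le_mul_of_nonneg_right _ (by positivity)
        exact_mod_cast Finset.card_filter_le _ _
    _ = (Fintype.card H : ℝ) * Real.exp (-(Real.log (Fintype.card H) + t)) := by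
        rw [← Real.exp_sub]
        congr 1
        rw [div_sub_div_same]
        rw [show ε * (OPT - c) - ε * OPT = -(ε * c) by ring]
        rw [hc]
        field_simp
    _ ≤ Real.exp (-t) := by
        rw [neg_add, Real.exp_add, ← mul_assoc]
        have : (Fintype.card H : ℝ) * Real.exp (-Real.log (Fintype.card H)) = 1 := by
          rw [Real.exp_neg, Real.exp_log (by linarith)]
          field_simp
        rw [this, one_mul]
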